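/- Let G be a nontrivial uniquely C4+-saturated graph. Then the girth of G is 3 or 4. -/

import Mathlib

open SimpleGraph

/-- The diamond graph `C₄⁺`: a `4`-cycle with one chord, i.e. `K₄` minus an edge. -/
def diamond : SimpleGraph (Fin 4) := (⊤ : SimpleGraph (Fin 4)).deleteEdges {s(0, 1)}

/-- `G'` is a copy of `H` in `G`, i.e. a subgraph of `G` isomorphic to `H`. -/
def IsCopy {W V : Type*} (H : SimpleGraph W) {G : SimpleGraph V} (G' : G.Subgraph) : Prop :=
  Nonempty (G'.coe ≃g H)

/-- `G` is uniquely `H`-saturated: `G` is `H`-free, and adding any non-edge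
creates exactly one copy of `H`. -/
def UniquelySaturated {W V : Type*} (H : SimpleGraph W) (G : SimpleGraph V) : Prop :=
  (∀ G' : G.Subgraph, ¬ IsCopy H G') ∧
    ∀ u v : V, u ≠ v → ¬ G.Adj u v →
      ∃! G' : (G ⊔ SimpleGraph.fromEdgeSet {s(u, v)}).Subgraph, IsCopy H G'

lemma diamond_adj (i j : Fin 4) : diamond.Adj i j ↔ i ≠ j ∧ s(i,j) ≠ s((0:Fin 4),1) := by
  simp [diamond, deleteEdges_adj, and_comm]

lemma copy_of_map {V : Type*} {G : SimpleGraph V} (f : Fin 4 → V) (hf : Function.Injective f)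
    (h : ∀ i j, diamond.Adj i j → G.Adj (f i) (f j)) :
    ∃ G' : G.Subgraph, IsCopy diamond G' := by
  refine ⟨⟨Set.range f, fun x y => ∃ i j, diamond.Adj i j ∧ f i = x ∧ f j = y, ?_, ?_, ?_⟩, ?_⟩
  · rintro x y ⟨i, j, hij, rfl, rfl⟩; exact h i j hij
  · rintro x y ⟨i, j, hij, rfl, rfl⟩; exact ⟨i, rfl⟩
  · constructor; rintro x y ⟨i, j, hij, rfl, rfl⟩; exact ⟨j, i, hij.symm, rfl, rfl⟩
  · refine ⟨⟨(Equiv.ofInjective f hf).symm, ?_⟩⟩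
    rintro ⟨x, hx⟩ ⟨y, hy⟩
    constructor
    · rintro hadj
      exact ⟨_, _, hadj, Equiv.apply_ofInjective_symm hf ⟨x, hx⟩,
        Equiv.apply_ofInjective_symm hf ⟨y, hy⟩⟩
    · rintro ⟨i, j, hij, hi, hj⟩
      have hi' : (Equiv.ofInjective f hf).symm ⟨x, hx⟩ = i := by
        apply hf; exact (Equiv.apply_ofInjective_symm hf ⟨x, hx⟩).trans hi.symm
      have hj' : (Equiv.ofInjective f hf).symm ⟨y, hy⟩ = j := by
        apply hf; exact (Equiv.apply_ofInjective_symm hf ⟨y, hy⟩).trans hj.symm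
      rw [hi', hj']; exact hij

lemma map_of_copy {V : Type*} {G : SimpleGraph V} {G' : G.Subgraph} (h : IsCopy diamond G') :
    ∃ f : Fin 4 → V, Function.Injective f ∧ ∀ i j, diamond.Adj i j → G.Adj (f i) (f j) := by
  obtain ⟨e⟩ := h
  refine ⟨fun i => (e.symm i : V), ?_, ?_⟩
  · exact Subtype.val_injective.comp e.symm.injective
  · intro i j hij
    have : G'.coe.Adj (e.symm i) (e.symm j) := e.symm.map_rel_iff.mpr hij
    exact G'.adj_sub this

lemma girth34_of_cycle {V : Type*} {G : SimpleGraph V} {a : V} {w : G.Walk a a}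
    (hw : w.IsCycle) (hl : w.length ≤ 4) : G.girth = 3 ∨ G.girth = 4 := by
  have hna : ¬ G.IsAcyclic := fun h => h w hw
  have h3 := three_le_girth hna
  have h1 : G.egirth ≤ (w.length : ℕ∞) := iInf_le_of_le a (iInf_le_of_le w (iInf_le _ hw))
  have h4 := ENat.toNat_le_toNat h1 (ENat.coe_ne_top _)
  rw [ENat.toNat_coe] at h4
  have : G.girth ≤ 4 := le_trans h4 hl
  omega

lemma girth34_of_triangle {V : Type*} {G : SimpleGraph V} {a b c : V} (hab : G.Adj a b)
    (hbc : G.Adj b c) (hca : G.Adj c a) : G.girth = 3 ∨ G.girth = 4 := by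
  have h1 := hab.ne; have h2 := hbc.ne; have h3 := hca.ne
  refine girth34_of_cycle (w := Walk.cons hab (Walk.cons hbc (Walk.cons hca Walk.nil))) ?_
    (by simp)
  simp [Walk.isCycle_def, Walk.isTrail_def, List.Nodup, Sym2.eq_iff]
  aesop

lemma girth34_of_square {V : Type*} {G : SimpleGraph V} {a b c d : V} (h1 : G.Adj a c)
    (h2 : G.Adj c b) (h3 : G.Adj b d) (h4 : G.Adj d a) (hab : a ≠ b) (hcd : c ≠ d) :
    G.girth = 3 ∨ G.girth = 4 := by
  have e1 := h1.ne; have e2 := h2.ne; have e3 := h3.ne; have e4 := h4.ne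
  refine girth34_of_cycle
    (w := Walk.cons h1 (Walk.cons h2 (Walk.cons h3 (Walk.cons h4 Walk.nil)))) ?_ (by simp)
  simp [Walk.isCycle_def, Walk.isTrail_def, List.Nodup, Sym2.eq_iff]
  aesop

theorem stmt3 {V : Type*} [Fintype V] (G : SimpleGraph V)
    (hcard : 4 ≤ Fintype.card V) (hsat : UniquelySaturated diamond G) :
    G.girth = 3 ∨ G.girth = 4 := by
  classical
  have hfree := hsat.1
  by_cases hcomp : ∀ u v : V, u ≠ v → G.Adj u v
  · exfalso
    obtain ⟨e⟩ := Function.Embedding.nonempty_of_card_le (α := Fin 4) (β := V)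
      (by simpa using hcard)
    obtain ⟨G', hG'⟩ := copy_of_map (G := G) e e.injective
      (fun i j hij => hcomp _ _ (e.injective.ne ((diamond_adj i j).mp hij).1))
    exact hfree G' hG'
  · push_neg at hcomp
    obtain ⟨u, v, huv, hnadj⟩ := hcomp
    obtain ⟨G', hG', -⟩ := hsat.2 u v huv hnadj
    obtain ⟨f, hf, hmap⟩ := map_of_copy hG'
    have split : ∀ {x y : V}, (G ⊔ SimpleGraph.fromEdgeSet {s(u, v)}).Adj x y →
        G.Adj x y ∨ s(x, y) = s(u, v) := by
      intro x y h
      rcases h with h | h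
      · exact Or.inl h
      · exact Or.inr (by simpa using h.1)
    have hab : f 0 ≠ f 1 := hf.ne (by decide)
    have hac : f 0 ≠ f 2 := hf.ne (by decide)
    have had : f 0 ≠ f 3 := hf.ne (by decide)
    have hbc : f 1 ≠ f 2 := hf.ne (by decide)
    have hbd : f 1 ≠ f 3 := hf.ne (by decide)
    have hcd : f 2 ≠ f 3 := hf.ne (by decide)
    have Eac := split (hmap 0 2 ((diamond_adj 0 2).mpr (by decide)))
    have Ead := split (hmap 0 3 ((diamond_adj 0 3).mpr (by decide)))
    have Ebc := split (hmap 1 2 ((diamond_adj 1 2).mpr (by decide)))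
    have Ebd := split (hmap 1 3 ((diamond_adj 1 3).mpr (by decide)))
    have Ecd := split (hmap 2 3 ((diamond_adj 2 3).mpr (by decide)))
    have key : ∀ {x y z w : V}, s(x, y) = s(u, v) → s(z, w) = s(u, v) →
        x = z ∧ y = w ∨ x = w ∧ y = z := fun h1 h2 => Sym2.eq_iff.mp (h1.trans h2.symm)
    -- if all five edges are in G, we get a diamond in G: contradiction
    have hnotall : ¬ (G.Adj (f 0) (f 2) ∧ G.Adj (f 0) (f 3) ∧ G.Adj (f 1) (f 2) ∧
        G.Adj (f 1) (f 3) ∧ G.Adj (f 2) (f 3)) := by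
      rintro ⟨g1, g2, g3, g4, g5⟩
      have hmapG : ∀ i j, diamond.Adj i j → G.Adj (f i) (f j) := by
        intro i j hij
        have h' := (diamond_adj i j).mp hij
        fin_cases i <;> fin_cases j <;>
          first
            | exact g1 | exact g2 | exact g3 | exact g4 | exact g5
            | exact g1.symm | exact g2.symm | exact g3.symm | exact g4.symm | exact g5.symm
            | simp_all
      obtain ⟨G₀, hG₀⟩ := copy_of_map (G := G) f hf hmapG
      exact hfree G₀ hG₀
    rcases Ecd with g5 | g5
    · rcases Eac with g1 | g1
      · rcases Ead with g2 | g2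
        · rcases Ebc with g3 | g3
          · rcases Ebd with g4 | g4
            · exact absurd ⟨g1, g2, g3, g4, g5⟩ hnotall
            · -- bd = uv : triangle a c d
              exact girth34_of_triangle g1 g5 g2.symm
          · exact girth34_of_triangle g1 g5 g2.symm
        · -- ad = uv : triangle b c d, need bc bd in G
          have g3 : G.Adj (f 1) (f 2) := by
            rcases Ebc with h | h
            · exact h
            · rcases key g2 h with ⟨e1, e2⟩ | ⟨e1, e2⟩ <;> exfalso <;>
              first
                | exact hab e1 | exact hac e1 | exact had e1 | exact hbc e1 | exact hbd e1 | exact hcd e1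
                | exact hab e1.symm | exact hac e1.symm | exact had e1.symm | exact hbc e1.symm | exact hbd e1.symm | exact hcd e1.symm
                | exact hab e2 | exact hac e2 | exact had e2 | exact hbc e2 | exact hbd e2 | exact hcd e2
                | exact hab e2.symm | exact hac e2.symm | exact had e2.symm | exact hbc e2.symm | exact hbd e2.symm | exact hcd e2.symm
          have g4 : G.Adj (f 1) (f 3) := by
            rcases Ebd with h | h
            · exact h
            · rcases key g2 h with ⟨e1, e2⟩ | ⟨e1, e2⟩ <;> exfalso <;>
              first
                | exact hab e1 | exact hac e1 | exact had e1 | exact hbc e1 | exact hbd e1 | exact hcd e1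
                | exact hab e1.symm | exact hac e1.symm | exact had e1.symm | exact hbc e1.symm | exact hbd e1.symm | exact hcd e1.symm
                | exact hab e2 | exact hac e2 | exact had e2 | exact hbc e2 | exact hbd e2 | exact hcd e2
                | exact hab e2.symm | exact hac e2.symm | exact had e2.symm | exact hbc e2.symm | exact hbd e2.symm | exact hcd e2.symm
          exact girth34_of_triangle g3 g5 g4.symm
      · -- ac = uv : triangle b c d
        have g3 : G.Adj (f 1) (f 2) := by
          rcases Ebc with h | h
          · exact h
          · rcases key g1 h with ⟨e1, e2⟩ | ⟨e1, e2⟩ <;> exfalso <;>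
              first
                | exact hab e1 | exact hac e1 | exact had e1 | exact hbc e1 | exact hbd e1 | exact hcd e1
                | exact hab e1.symm | exact hac e1.symm | exact had e1.symm | exact hbc e1.symm | exact hbd e1.symm | exact hcd e1.symm
                | exact hab e2 | exact hac e2 | exact had e2 | exact hbc e2 | exact hbd e2 | exact hcd e2
                | exact hab e2.symm | exact hac e2.symm | exact had e2.symm | exact hbc e2.symm | exact hbd e2.symm | exact hcd e2.symm
        have g4 : G.Adj (f 1) (f 3) := by
          rcases Ebd with h | h
          · exact h
          · rcases key g1 h with ⟨e1, e2⟩ | ⟨e1, e2⟩ <;> exfalso <;>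
              first
                | exact hab e1 | exact hac e1 | exact had e1 | exact hbc e1 | exact hbd e1 | exact hcd e1
                | exact hab e1.symm | exact hac e1.symm | exact had e1.symm | exact hbc e1.symm | exact hbd e1.symm | exact hcd e1.symm
                | exact hab e2 | exact hac e2 | exact had e2 | exact hbc e2 | exact hbd e2 | exact hcd e2
                | exact hab e2.symm | exact hac e2.symm | exact had e2.symm | exact hbc e2.symm | exact hbd e2.symm | exact hcd e2.symm
        exact girth34_of_triangle g3 g5 g4.symm
    · -- cd = uv : 4-cycle a c b d
      have g1 : G.Adj (f 0) (f 2) := by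
        rcases Eac with h | h
        · exact h
        · rcases key g5 h with ⟨e1, e2⟩ | ⟨e1, e2⟩ <;> exfalso <;>
              first
                | exact hab e1 | exact hac e1 | exact had e1 | exact hbc e1 | exact hbd e1 | exact hcd e1
                | exact hab e1.symm | exact hac e1.symm | exact had e1.symm | exact hbc e1.symm | exact hbd e1.symm | exact hcd e1.symm
                | exact hab e2 | exact hac e2 | exact had e2 | exact hbc e2 | exact hbd e2 | exact hcd e2
                | exact hab e2.symm | exact hac e2.symm | exact had e2.symm | exact hbc e2.symm | exact hbd e2.symm | exact hcd e2.symm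
      have g2 : G.Adj (f 0) (f 3) := by
        rcases Ead with h | h
        · exact h
        · rcases key g5 h with ⟨e1, e2⟩ | ⟨e1, e2⟩ <;> exfalso <;>
              first
                | exact hab e1 | exact hac e1 | exact had e1 | exact hbc e1 | exact hbd e1 | exact hcd e1
                | exact hab e1.symm | exact hac e1.symm | exact had e1.symm | exact hbc e1.symm | exact hbd e1.symm | exact hcd e1.symm
                | exact hab e2 | exact hac e2 | exact had e2 | exact hbc e2 | exact hbd e2 | exact hcd e2
                | exact hab e2.symm | exact hac e2.symm | exact had e2.symm | exact hbc e2.symm | exact hbd e2.symm | exact hcd e2.symm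
      have g3 : G.Adj (f 1) (f 2) := by
        rcases Ebc with h | h
        · exact h
        · rcases key g5 h with ⟨e1, e2⟩ | ⟨e1, e2⟩ <;> exfalso <;>
              first
                | exact hab e1 | exact hac e1 | exact had e1 | exact hbc e1 | exact hbd e1 | exact hcd e1
                | exact hab e1.symm | exact hac e1.symm | exact had e1.symm | exact hbc e1.symm | exact hbd e1.symm | exact hcd e1.symm
                | exact hab e2 | exact hac e2 | exact had e2 | exact hbc e2 | exact hbd e2 | exact hcd e2
                | exact hab e2.symm | exact hac e2.symm | exact had e2.symm | exact hbc e2.symm | exact hbd e2.symm | exact hcd e2.symm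
      have g4 : G.Adj (f 1) (f 3) := by
        rcases Ebd with h | h
        · exact h
        · rcases key g5 h with ⟨e1, e2⟩ | ⟨e1, e2⟩ <;> exfalso <;>
              first
                | exact hab e1 | exact hac e1 | exact had e1 | exact hbc e1 | exact hbd e1 | exact hcd e1
                | exact hab e1.symm | exact hac e1.symm | exact had e1.symm | exact hbc e1.symm | exact hbd e1.symm | exact hcd e1.symm
                | exact hab e2 | exact hac e2 | exact had e2 | exact hbc e2 | exact hbd e2 | exact hcd e2
                | exact hab e2.symm | exact hac e2.symm | exact had e2.symm | exact hbc e2.symm | exact hbd e2.symm | exact hcd e2.symm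
      exact girth34_of_square g1 g3.symm g4 g2.symm hab hcd
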